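/- Let γ be a permutation word of Σ. Then for every word w over Σ and every k ∈ ℕ, ι(w) = k if and only if w ∼_k γ^k and w is not (k+1)-Simon congruent to γ^{k+1}. -/

import Mathlib

open List

section Defs

variable {α : Type*}

/-- A word `w` is `k`-universal if every word of length at most `k` is a subsequence of `w`. -/
def IsKUniversal [Fintype α] (k : ℕ) (w : List α) : Prop :=
  ∀ u : List α, u.length ≤ k → u.Sublist w

/-- The universality index `ι(w)`: the largest `k` such that `w` is `k`-universal. -/
noncomputable def univIndex [Fintype α] (w : List α) : ℕ :=
  sSup {k | IsKUniversal k w}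

/-- `c`-fold concatenation (power) of a word. -/
def wpow (u : List α) (c : ℕ) : List α := (List.replicate c u).flatten

/-- Auxiliary (fuelled) computation of the arch factorization: returns the list of
arches and the rest. Each arch is the shortest prefix of the remaining suffix
containing every letter of the alphabet. -/
noncomputable def archFactAux [Fintype α] [DecidableEq α] :
    ℕ → List α → List (List α) × List α
  | 0, w => ([], w)
  | fuel + 1, w =>
    if Finset.univ ⊆ w.toFinset then
      let n := sInf {n | Finset.univ ⊆ (w.take n).toFinset}
      let p := archFactAux fuel (w.drop n)
      (w.take n :: p.1, p.2)
    else ([], w)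

/-- The arch factorization of `w`: the list of arches together with the rest. -/
noncomputable def archFact [Fintype α] [DecidableEq α] (w : List α) :
    List (List α) × List α :=
  archFactAux w.length w

/-- `γ(w)`: the distinct letters of `w` in order of their first occurrence. -/
def gammaWord [DecidableEq α] (w : List α) : List α := w.reverse.dedup.reverse

/-- The suffix of `w` strictly after the first occurrence of the letter `a`. -/
def afterFirst [DecidableEq α] (a : α) (w : List α) : List α :=
  w.drop (w.idxOf a + 1)

/-- `ι_a(w)`: the universality index of the suffix of `w` after the first occurrence of `a`. -/
noncomputable def iotaLetter [Fintype α] [DecidableEq α] (a : α) (w : List α) : ℕ :=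
  univIndex (afterFirst a w)

/-- `R_a(w)`: the alphabet of the rest of the arch factorization of the suffix of `w`
after the first occurrence of `a`. -/
noncomputable def restLetter [Fintype α] [DecidableEq α] (a : α) (w : List α) : Finset α :=
  ((archFact (afterFirst a w)).2).toFinset

/-- `Subseq_k(w)`: the set of subsequences of `w` of length at most `k`. -/
def subseqK (k : ℕ) (w : List α) : Set (List α) :=
  {u | u.length ≤ k ∧ u.Sublist w}

/-- Simon's congruence `u ∼_k v`. -/
def SimonCongr (k : ℕ) (u v : List α) : Prop := subseqK k u = subseqK k v

/-- Applying a substitution `h` to a pattern: replace each variable occurrence by its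
image and leave terminal letters unchanged. -/
def applySub {X : Type*} (h : X → List α) (p : List (α ⊕ X)) : List α :=
  p.flatMap (Sum.elim (fun a => [a]) h)

/-- A permutation word of the alphabet: every letter occurs exactly once. -/
def IsPermWord [DecidableEq α] (γ : List α) : Prop :=
  ∀ a : α, γ.count a = 1

end Defs

section Aux

variable {α : Type*} [Fintype α] [DecidableEq α] [Nonempty α]

lemma isKUniversal_mono {j k : ℕ} {w : List α} (hjk : j ≤ k)
    (h : IsKUniversal k w) : IsKUniversal j w :=
  fun u hu => h u (hu.trans hjk)

lemma isKUniversal_le_length {k : ℕ} {w : List α} (h : IsKUniversal k w) :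
    k ≤ w.length := by
  obtain ⟨a⟩ := ‹Nonempty α›
  have := (h (List.replicate k a) (by simp)).length_le
  simpa using this

lemma isKUniversal_zero (w : List α) : IsKUniversal 0 w := by
  intro u hu
  rw [List.length_eq_zero_iff.mp (Nat.le_zero.mp hu)]
  exact List.nil_sublist w

lemma univIndex_eq_iff {k : ℕ} {w : List α} :
    univIndex w = k ↔ IsKUniversal k w ∧ ¬ IsKUniversal (k + 1) w := by
  have hne : {n | IsKUniversal n w}.Nonempty := ⟨0, isKUniversal_zero w⟩
  have hbd : BddAbove {n | IsKUniversal n w} :=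
    ⟨w.length, fun n hn => isKUniversal_le_length hn⟩
  have hmem : univIndex w ∈ {n | IsKUniversal n w} := Nat.sSup_mem hne hbd
  constructor
  · rintro rfl
    refine ⟨hmem, fun h => ?_⟩
    have h2 : univIndex w + 1 ≤ univIndex w := le_csSup hbd h
    omega
  · rintro ⟨h1, h2⟩
    have hle : univIndex w ≤ k := by
      by_contra hlt
      exact h2 (isKUniversal_mono (by omega) hmem)
    exact le_antisymm hle (le_csSup hbd h1)

lemma wpow_universal {γ : List α} (hγ : IsPermWord γ) (k : ℕ) :
    IsKUniversal k (wpow γ k) := by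
  induction k with
  | zero => exact isKUniversal_zero _
  | succ n ih =>
    intro u hu
    have hpow : wpow γ (n + 1) = γ ++ wpow γ n := by
      simp [wpow, List.replicate_succ]
    rw [hpow]
    cases u with
    | nil => exact List.nil_sublist _
    | cons a t =>
      have ha : a ∈ γ := by
        have := hγ a; exact List.count_pos_iff.mp (by omega)
      have h1 : [a].Sublist γ := List.singleton_sublist.mpr ha
      have h2 : t.Sublist (wpow γ n) := ih t (by simpa using hu)
      exact h1.append h2

lemma simonCongr_wpow_iff {γ : List α} (hγ : IsPermWord γ) (k : ℕ) (w : List α) :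
    SimonCongr k w (wpow γ k) ↔ IsKUniversal k w := by
  constructor
  · intro h u hu
    have : u ∈ subseqK k (wpow γ k) := ⟨hu, wpow_universal hγ k u hu⟩
    rw [← h] at this
    exact this.2
  · intro h
    ext u
    exact ⟨fun ⟨hl, _⟩ => ⟨hl, wpow_universal hγ k u hl⟩, fun ⟨hl, _⟩ => ⟨hl, h u hl⟩⟩

end Aux

/-- `ι(w) = k` iff `w ∼_k γ^k` and `w` is not `(k+1)`-Simon congruent to
`γ^(k+1)`, for a permutation word `γ` of `Σ`. -/
theorem stmt13 {α : Type*} [Fintype α] [DecidableEq α] [Nonempty α]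
    (γ : List α) (hγ : IsPermWord γ) (w : List α) (k : ℕ) :
    univIndex w = k ↔
      (SimonCongr k w (wpow γ k) ∧ ¬ SimonCongr (k + 1) w (wpow γ (k + 1))) := by
  rw [simonCongr_wpow_iff hγ, simonCongr_wpow_iff hγ, univIndex_eq_iff]
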